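/- For nonnegative integer n, positive integer a, and real x, the generalized Bernoulli polynomial satisfies B_n^a(-x) = \sum_{k=0}^{n} (-1)^k * k! * B_{n,k}(\lambda_1, ..., \lambda_{n-k+1}), where \lambda_m = \sum_{l=0}^{m} S(l+a,a) * x^{m-l} * C(m,l) * C(l+a,a)^{-1}. -/

import Mathlib

open Finset PowerSeries

/-- Stirling numbers of the second kind. -/
def stirling2 : ℕ → ℕ → ℕ
  | 0, 0 => 1
  | 0, _ + 1 => 0
  | _ + 1, 0 => 0
  | n + 1, k + 1 => (k + 1) * stirling2 n (k + 1) + stirling2 n k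



lemma stirling2_zero_succ (k : ℕ) : stirling2 0 (k+1) = 0 := rfl
lemma stirling2_succ_zero (n : ℕ) : stirling2 (n+1) 0 = 0 := rfl
lemma stirling2_succ_succ (n k : ℕ) :
    stirling2 (n+1) (k+1) = (k + 1) * stirling2 n (k + 1) + stirling2 n k := rfl

lemma stirling2_eq_zero_of_lt : ∀ {n k : ℕ}, n < k → stirling2 n k = 0 := by
  intro n
  induction n with
  | zero => intro k hk; cases k with
    | zero => omega
    | succ k => rfl
  | succ n ih =>
    intro k hk
    cases k with
    | zero => omega
    | succ k => rw [stirling2_succ_succ, ih (by omega), ih (by omega)]; simp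

lemma stirling2_self : ∀ a : ℕ, stirling2 a a = 1 := by
  intro a
  induction a with
  | zero => rfl
  | succ a ih => rw [stirling2_succ_succ, ih, stirling2_eq_zero_of_lt (by omega)]; simp

lemma stirling2_succ_eq (n : ℕ) : ∀ a : ℕ,
    stirling2 (n+1) (a+1) = ∑ j ∈ Finset.range (n+1), n.choose j * stirling2 j a := by
  induction n with
  | zero => intro a; simp [stirling2_succ_succ, stirling2_zero_succ]
  | succ n ih =>
    intro a
    have step1 : ∑ j ∈ Finset.range (n+2), (n+1).choose j * stirling2 j a
        = ∑ j ∈ Finset.range (n+1), (n.choose j + n.choose (j+1)) * stirling2 (j+1) a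
          + n.choose 0 * stirling2 0 a := by
      rw [Finset.sum_range_succ' (fun j => (n+1).choose j * stirling2 j a)]
      simp [Nat.choose_succ_succ]
    have step2 : ∑ j ∈ Finset.range (n+1), n.choose (j+1) * stirling2 (j+1) a
          + n.choose 0 * stirling2 0 a
        = ∑ j ∈ Finset.range (n+1), n.choose j * stirling2 j a := by
      rw [← Finset.sum_range_succ' (fun j => n.choose j * stirling2 j a),
        Finset.sum_range_succ, Nat.choose_succ_self, zero_mul, add_zero]
    rw [step1]
    have expand : ∑ j ∈ Finset.range (n+1), (n.choose j + n.choose (j+1)) * stirling2 (j+1) a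
        = ∑ j ∈ Finset.range (n+1), n.choose j * stirling2 (j+1) a
          + ∑ j ∈ Finset.range (n+1), n.choose (j+1) * stirling2 (j+1) a := by
      rw [← Finset.sum_add_distrib]; exact Finset.sum_congr rfl (fun j _ => add_mul _ _ _)
    rw [expand, add_assoc (∑ j ∈ Finset.range (n+1), n.choose j * stirling2 (j+1) a), step2, ← ih a]
    cases a with
    | zero =>
      have hz : ∀ j ∈ Finset.range (n+1), n.choose j * stirling2 (j+1) 0 = 0 := by
        intro j _; rw [stirling2_succ_zero]; simp
      rw [Finset.sum_eq_zero hz, zero_add, stirling2_succ_succ (n+1) 0,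
        stirling2_succ_zero, add_zero]; ring
    | succ b =>
      have hA : ∑ j ∈ Finset.range (n+1), n.choose j * stirling2 (j+1) (b+1)
          = (b+1) * stirling2 (n+1) (b+2) + stirling2 (n+1) (b+1) := by
        have e1 : ∀ j ∈ Finset.range (n+1), n.choose j * stirling2 (j+1) (b+1)
            = (b+1) * (n.choose j * stirling2 j (b+1)) + n.choose j * stirling2 j b := by
          intro j _; rw [stirling2_succ_succ]; ring
        rw [Finset.sum_congr rfl e1, Finset.sum_add_distrib, ← Finset.mul_sum,
          ← ih (b+1), ← ih b]
      rw [hA, stirling2_succ_succ (n+1) (b+1)]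
      ring

lemma stirling2_conv (n a : ℕ) :
    ∑ j ∈ Finset.range n, n.choose j * stirling2 j a = (a+1) * stirling2 n (a+1) := by
  cases n with
  | zero => simp [stirling2_eq_zero_of_lt (Nat.succ_pos a)]
  | succ m =>
    have h3 := stirling2_succ_eq (m+1) a
    rw [Finset.sum_range_succ, Nat.choose_self, one_mul,
      stirling2_succ_succ (m+1) a] at h3
    omega

/-- Partial Bell polynomial `B_{n,k}(x 1, x 2, ...)`, summing over sequences
`ℓ` of nonnegative integers with `∑ i * ℓ i = n` and `∑ ℓ i = k`. -/
noncomputable def bellPoly (n k : ℕ) (x : ℕ → ℝ) : ℝ :=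
  ∑ ℓ ∈ (Fintype.piFinset fun _ : Fin n => Finset.range (n + 1)).filter
      (fun ℓ => (∑ i, (i.1 + 1) * ℓ i) = n ∧ (∑ i, ℓ i) = k),
    ((n.factorial : ℝ) / ∏ i, ((ℓ i).factorial : ℝ)) *
      ∏ i, (x (i.1 + 1) / ((i.1 + 1).factorial : ℝ)) ^ (ℓ i)

/-- The power series `(e^t - 1)/t`, with constant term `1`. -/
noncomputable def expm1DivT : PowerSeries ℝ :=
  PowerSeries.mk fun n => 1 / ((n + 1).factorial : ℝ)

/-- The power series `e^{x t}`. -/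
noncomputable def expSeries (x : ℝ) : PowerSeries ℝ :=
  PowerSeries.mk fun n => x ^ n / (n.factorial : ℝ)



noncomputable def E1 : PowerSeries ℝ :=
  PowerSeries.mk fun n => if n = 0 then 0 else 1 / (n.factorial : ℝ)

lemma coeff_E1_pow (a : ℕ) (m : ℕ) :
    PowerSeries.coeff m (E1 ^ a) = (a.factorial : ℝ) * (stirling2 m a : ℝ) / (m.factorial : ℝ) := by
  induction a generalizing m with
  | zero =>
    rw [pow_zero, PowerSeries.coeff_one]
    cases m with
    | zero => simp [show stirling2 0 0 = 1 from rfl]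
    | succ m =>
      simp [stirling2_succ_zero]
  | succ a ih =>
    rw [pow_succ, PowerSeries.coeff_mul, Finset.Nat.sum_antidiagonal_eq_sum_range_succ_mk,
      Finset.sum_range_succ]
    have last : PowerSeries.coeff (m - m) E1 = 0 := by simp [E1]
    rw [last, mul_zero, add_zero]
    have key : ∀ i ∈ Finset.range m,
        PowerSeries.coeff i (E1 ^ a) * PowerSeries.coeff (m - i) E1
        = ((m.choose i * stirling2 i a : ℕ) : ℝ) * (a.factorial : ℝ) / (m.factorial : ℝ) := by
      intro i hi
      rw [Finset.mem_range] at hi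
      rw [ih, E1, PowerSeries.coeff_mk, if_neg (by omega)]
      have hfac : (m.choose i : ℝ) = (m.factorial : ℝ) / ((i.factorial : ℝ) * ((m-i).factorial : ℝ)) := by
        rw [eq_div_iff (by positivity)]
        rw [← Nat.cast_mul, ← Nat.cast_mul, ← Nat.choose_mul_factorial_mul_factorial hi.le, mul_assoc]
      push_cast
      rw [hfac]
      field_simp
    rw [Finset.sum_congr rfl key, ← Finset.sum_div, ← Finset.sum_mul, ← Nat.cast_sum,
      stirling2_conv m a]
    push_cast [Nat.factorial_succ]
    ring

lemma X_mul_expm1DivT : (PowerSeries.X : PowerSeries ℝ) * expm1DivT = E1 := by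
  ext m
  cases m with
  | zero =>
    rw [PowerSeries.coeff_zero_eq_constantCoeff, map_mul, PowerSeries.constantCoeff_X, zero_mul]
    simp [E1]
  | succ m =>
    rw [PowerSeries.coeff_succ_X_mul]
    simp [E1, expm1DivT]

lemma coeff_expm1DivT_pow (a l : ℕ) :
    PowerSeries.coeff l (expm1DivT ^ a)
      = (a.factorial : ℝ) * (stirling2 (l + a) a : ℝ) / ((l + a).factorial : ℝ) := by
  have h1 : (PowerSeries.X : PowerSeries ℝ) ^ a * expm1DivT ^ a = E1 ^ a := by
    rw [← mul_pow, X_mul_expm1DivT]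
  have h2 := PowerSeries.coeff_X_pow_mul (expm1DivT ^ a) a l
  rw [h1, coeff_E1_pow] at h2
  rw [h2]

lemma choose_cast_eq (m i : ℕ) (h : i ≤ m) :
    (m.choose i : ℝ) = (m.factorial : ℝ) / ((i.factorial : ℝ) * ((m - i).factorial : ℝ)) := by
  rw [eq_div_iff (by positivity), ← Nat.cast_mul, ← Nat.cast_mul,
    ← Nat.choose_mul_factorial_mul_factorial h]
  push_cast
  ring

lemma coeff_h (a : ℕ) (x : ℝ) (m : ℕ) :
    PowerSeries.coeff m (expm1DivT ^ a * expSeries x)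
      = (∑ l ∈ Finset.range (m + 1), (stirling2 (l + a) a : ℝ) * x ^ (m - l) * (m.choose l : ℝ) *
          ((l + a).choose a : ℝ)⁻¹) / (m.factorial : ℝ) := by
  rw [PowerSeries.coeff_mul, Finset.Nat.sum_antidiagonal_eq_sum_range_succ_mk, Finset.sum_div]
  refine Finset.sum_congr rfl fun i hi => ?_
  rw [Finset.mem_range] at hi
  rw [coeff_expm1DivT_pow, expSeries, PowerSeries.coeff_mk]
  have hc1 : ((i + a).choose a : ℝ)
      = ((i + a).factorial : ℝ) / ((a.factorial : ℝ) * (((i + a) - a).factorial : ℝ)) :=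
    choose_cast_eq _ _ (Nat.le_add_left a i)
  rw [Nat.add_sub_cancel] at hc1
  rw [hc1, choose_cast_eq m i (by omega)]
  have h1 : ((i + a).factorial : ℝ) ≠ 0 := by positivity
  have h2 : (a.factorial : ℝ) ≠ 0 := by positivity
  have h3 : (i.factorial : ℝ) ≠ 0 := by positivity
  have h4 : ((m - i).factorial : ℝ) ≠ 0 := by positivity
  have h5 : (m.factorial : ℝ) ≠ 0 := by positivity
  field_simp

lemma expSeries_mul (x y : ℝ) : expSeries x * expSeries y = expSeries (x + y) := by
  ext m
  rw [PowerSeries.coeff_mul, Finset.Nat.sum_antidiagonal_eq_sum_range_succ_mk]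
  simp only [expSeries, PowerSeries.coeff_mk]
  rw [add_pow, Finset.sum_div]
  refine Finset.sum_congr rfl fun i hi => ?_
  rw [Finset.mem_range] at hi
  rw [choose_cast_eq m i (by omega)]
  have h3 : (i.factorial : ℝ) ≠ 0 := by positivity
  have h4 : ((m - i).factorial : ℝ) ≠ 0 := by positivity
  have h5 : (m.factorial : ℝ) ≠ 0 := by positivity
  field_simp

lemma expSeries_zero : expSeries 0 = 1 := by
  ext m
  rw [PowerSeries.coeff_one]
  cases m with
  | zero => simp [expSeries]
  | succ m => simp [expSeries]

lemma constCoeff_pow_ne (a : ℕ) : constantCoeff (expm1DivT ^ a) ≠ 0 := by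
  rw [map_pow]
  have : constantCoeff expm1DivT = 1 := by simp [expm1DivT]
  rw [this, one_pow]; norm_num

lemma inv_eq_inv_h (a : ℕ) (x : ℝ) :
    (expm1DivT ^ a)⁻¹ * expSeries (-x) = (expm1DivT ^ a * expSeries x)⁻¹ := by
  have hc : constantCoeff (expm1DivT ^ a * expSeries x) ≠ 0 := by
    rw [map_mul]
    have : constantCoeff (expSeries x) = 1 := by simp [expSeries]
    rw [this, mul_one]; exact constCoeff_pow_ne a
  rw [PowerSeries.eq_inv_iff_mul_eq_one hc]
  have : (expm1DivT ^ a)⁻¹ * expSeries (-x) * (expm1DivT ^ a * expSeries x)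
      = ((expm1DivT ^ a)⁻¹ * expm1DivT ^ a) * (expSeries (-x) * expSeries x) := by ring
  rw [this, PowerSeries.inv_mul_cancel _ (constCoeff_pow_ne a), expSeries_mul, one_mul,
    neg_add_cancel, expSeries_zero]

lemma coeff_pow_eq_zero' {φ : PowerSeries ℝ} (h0 : constantCoeff φ = 0) {j k : ℕ}
    (hjk : j < k) : PowerSeries.coeff j (φ ^ k) = 0 := by
  have hX : (PowerSeries.X : PowerSeries ℝ) ∣ φ := PowerSeries.X_dvd_iff.mpr h0
  have : (PowerSeries.X : PowerSeries ℝ) ^ k ∣ φ ^ k := pow_dvd_pow_of_dvd hX k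
  exact PowerSeries.X_pow_dvd_iff.mp this j hjk

lemma coeff_inv_geom (h : PowerSeries ℝ) (hc : constantCoeff h = 1) (n : ℕ) :
    PowerSeries.coeff n h⁻¹ = ∑ k ∈ Finset.range (n + 1), PowerSeries.coeff n ((1 - h) ^ k) := by
  have h0 : constantCoeff (1 - h) = 0 := by rw [map_sub, map_one, hc, sub_self]
  set Sps : PowerSeries ℝ := PowerSeries.mk fun N =>
    PowerSeries.coeff N (∑ k ∈ Finset.range (N + 1), (1 - h) ^ k) with hS
  have hSj : ∀ N j, j ≤ N → PowerSeries.coeff j Sps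
      = PowerSeries.coeff j (∑ k ∈ Finset.range (N + 1), (1 - h) ^ k) := by
    intro N j hj
    rw [hS, PowerSeries.coeff_mk]
    have hsplit : Finset.range (N + 1) = Finset.range (j + 1) ∪ Finset.Ico (j + 1) (N + 1) := by
      rw [Finset.range_eq_Ico, Finset.range_eq_Ico, Finset.Ico_union_Ico_eq_Ico (by omega) (by omega)]
    rw [hsplit, Finset.sum_union (by
      rw [Finset.range_eq_Ico]; exact Finset.Ico_disjoint_Ico_consecutive 0 (j+1) (N+1))]
    rw [map_add]
    have hz : PowerSeries.coeff j (∑ k ∈ Finset.Ico (j + 1) (N + 1), (1 - h) ^ k) = 0 := by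
      rw [map_sum]
      refine Finset.sum_eq_zero fun k hk => ?_
      rw [Finset.mem_Ico] at hk
      exact coeff_pow_eq_zero' h0 (by omega)
    rw [hz, add_zero]
  have hmul : h * Sps = 1 := by
    ext N
    have e1 : PowerSeries.coeff N (h * Sps)
        = PowerSeries.coeff N (h * ∑ k ∈ Finset.range (N + 1), (1 - h) ^ k) := by
      rw [PowerSeries.coeff_mul, PowerSeries.coeff_mul]
      refine Finset.sum_congr rfl fun p hp => ?_
      rw [Finset.HasAntidiagonal.mem_antidiagonal] at hp
      rw [hSj N p.2 (by omega)]
    have e2 : h * ∑ k ∈ Finset.range (N + 1), (1 - h) ^ k = 1 - (1 - h) ^ (N + 1) := by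
      have := geom_sum_mul (1 - h) (N + 1)
      have h2 : ((1 - h) - 1) * ∑ k ∈ Finset.range (N + 1), (1 - h) ^ k
          = (1 - h) ^ (N + 1) - 1 := by
        rw [← this]; ring
      have h3 : (1 - h) - 1 = -h := by ring
      rw [h3] at h2
      linear_combination -h2
    rw [e1, e2, map_sub, coeff_pow_eq_zero' h0 (by omega), sub_zero]
  have hinv : h⁻¹ = Sps := by
    have hcne : constantCoeff h ≠ 0 := by rw [hc]; norm_num
    calc h⁻¹ = h⁻¹ * (h * Sps) := by rw [hmul, mul_one]
    _ = (h⁻¹ * h) * Sps := by ring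
    _ = Sps := by rw [PowerSeries.inv_mul_cancel _ hcne, one_mul]
  rw [hinv, hS, PowerSeries.coeff_mk, map_sum]

/-- The generalized Bernoulli polynomial value `B_n^a(-x)`, defined via the
exponential generating function `(t/(e^t-1))^a e^{-x t}`. -/
noncomputable def genBernoulliNeg (a : ℕ) (x : ℝ) (n : ℕ) : ℝ :=
  (n.factorial : ℝ) * PowerSeries.coeff n ((expm1DivT ^ a)⁻¹ * expSeries (-x))



lemma bell_coeff (n k : ℕ) (x : ℕ → ℝ) (g : PowerSeries ℝ)
    (h0 : PowerSeries.coeff 0 g = 0)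
    (hg : ∀ j, 1 ≤ j → j ≤ n → PowerSeries.coeff j g = x j / (j.factorial : ℝ)) :
    (n.factorial : ℝ) * PowerSeries.coeff n (g ^ k)
      = (k.factorial : ℝ) * bellPoly n k x := by
  classical
  set c : ℕ → ℝ := fun j => x j / (j.factorial : ℝ) with hc
  set p : PowerSeries ℝ :=
    ∑ i : Fin n, PowerSeries.C (c (i.1 + 1)) * PowerSeries.X ^ (i.1 + 1) with hp
  have hcoeffp : ∀ j, PowerSeries.coeff j p
      = if 1 ≤ j ∧ j ≤ n then c j else 0 := by
    intro j
    rw [hp, map_sum]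
    have hterm : ∀ i : Fin n, PowerSeries.coeff j
        (PowerSeries.C (c (i.1 + 1)) * PowerSeries.X ^ (i.1 + 1))
        = if j = i.1 + 1 then c (i.1 + 1) else 0 := by
      intro i
      rw [PowerSeries.coeff_C_mul, PowerSeries.coeff_X_pow]
      split <;> simp
    rw [Finset.sum_congr rfl fun i _ => hterm i]
    by_cases hj : 1 ≤ j ∧ j ≤ n
    · rw [Finset.sum_eq_single (⟨j - 1, by omega⟩ : Fin n)]
      · have hv : ((⟨j - 1, by omega⟩ : Fin n) : ℕ) = j - 1 := rfl
        have hj1 : j - 1 + 1 = j := by omega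
        rw [hv, hj1, if_pos rfl, if_pos hj]
      · intro b _ hb
        rw [if_neg]
        intro hjb
        apply hb
        apply Fin.ext
        have hv : ((⟨j - 1, by omega⟩ : Fin n) : ℕ) = j - 1 := rfl
        rw [hv]
        omega
      · intro h; exact absurd (Finset.mem_univ _) h
    · rw [if_neg hj]
      refine Finset.sum_eq_zero fun i _ => ?_
      rw [if_neg (by omega)]
  have hdvd : (PowerSeries.X : PowerSeries ℝ) ^ (n + 1) ∣ g - p := by
    rw [PowerSeries.X_pow_dvd_iff]
    intro m hm
    rw [map_sub, hcoeffp]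
    rcases Nat.eq_zero_or_pos m with hm0 | hm1
    · subst hm0; rw [h0, if_neg (by omega), sub_zero]
    · rw [hg m hm1 (by omega), if_pos ⟨hm1, by omega⟩, sub_self]
  have hco : PowerSeries.coeff n (g ^ k) = PowerSeries.coeff n (p ^ k) := by
    have h2 : (PowerSeries.X : PowerSeries ℝ) ^ (n + 1) ∣ g ^ k - p ^ k :=
      dvd_trans hdvd (sub_dvd_pow_sub_pow g p k)
    have := PowerSeries.X_pow_dvd_iff.mp h2 n (by omega)
    rw [map_sub] at this
    linarith
  rw [hco, hp, Finset.sum_pow_eq_sum_piAntidiag]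
  -- coefficient of each term
  have hterm : ∀ κ : Fin n → ℕ, PowerSeries.coeff n
      ((Nat.multinomial Finset.univ κ : PowerSeries ℝ) *
        ∏ i : Fin n, (PowerSeries.C (c (i.1 + 1)) * PowerSeries.X ^ (i.1 + 1)) ^ κ i)
      = if (∑ i : Fin n, (i.1 + 1) * κ i) = n then
          (Nat.multinomial Finset.univ κ : ℝ) * ∏ i : Fin n, c (i.1 + 1) ^ κ i
        else 0 := by
    intro κ
    have e1 : ∏ i : Fin n, (PowerSeries.C (c (i.1 + 1)) * PowerSeries.X ^ (i.1 + 1)) ^ κ i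
        = PowerSeries.C (∏ i : Fin n, c (i.1 + 1) ^ κ i) *
          PowerSeries.X ^ (∑ i : Fin n, (i.1 + 1) * κ i) := by
      rw [map_prod, ← Finset.prod_pow_eq_pow_sum, ← Finset.prod_mul_distrib]
      refine Finset.prod_congr rfl fun i _ => ?_
      rw [mul_pow, map_pow, pow_mul]
    rw [e1, ← mul_assoc, ← map_natCast (PowerSeries.C (R := ℝ)) (Nat.multinomial Finset.univ κ),
      ← map_mul, PowerSeries.coeff_C_mul, PowerSeries.coeff_X_pow]
    split <;> rename_i hh
    · rw [if_pos hh.symm, mul_one]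
    · rw [if_neg (fun hx => hh hx.symm), mul_zero]
  rw [map_sum, Finset.sum_congr rfl fun κ _ => hterm κ, Finset.sum_ite, Finset.sum_const_zero,
    add_zero, Finset.mul_sum, bellPoly, Finset.mul_sum]
  -- identify index sets
  have hsets : (Finset.piAntidiag (Finset.univ : Finset (Fin n)) k).filter
        (fun κ => (∑ i : Fin n, (i.1 + 1) * κ i) = n)
      = (Fintype.piFinset fun _ : Fin n => Finset.range (n + 1)).filter
        (fun ℓ => (∑ i, (i.1 + 1) * ℓ i) = n ∧ (∑ i, ℓ i) = k) := by
    ext κ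
    simp only [Finset.mem_filter, Finset.mem_piAntidiag, Fintype.mem_piFinset,
      Finset.mem_range, Finset.mem_univ, implies_true, and_true, ne_eq]
    constructor
    · rintro ⟨hsum, hdeg⟩
      refine ⟨fun i => ?_, hdeg, hsum⟩
      have h1 : (i.1 + 1) * κ i ≤ ∑ j : Fin n, (j.1 + 1) * κ j :=
        Finset.single_le_sum (f := fun j : Fin n => (j.1 + 1) * κ j)
          (fun j _ => Nat.zero_le _) (Finset.mem_univ i)
      have h2 : κ i ≤ (i.1 + 1) * κ i := Nat.le_mul_of_pos_left _ (by omega)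
      omega
    · rintro ⟨hb, hdeg, hsum⟩
      exact ⟨hsum, hdeg⟩
  rw [hsets]
  refine Finset.sum_congr rfl fun κ hκ => ?_
  rw [Finset.mem_filter] at hκ
  obtain ⟨-, -, hsum⟩ := hκ
  have hmult : (Nat.multinomial Finset.univ κ : ℝ)
      = (k.factorial : ℝ) / ∏ i : Fin n, ((κ i).factorial : ℝ) := by
    rw [eq_div_iff (by positivity)]
    rw [← Nat.cast_prod, ← Nat.cast_mul, mul_comm, Nat.multinomial_spec, hsum]
  rw [hmult]
  simp only [hc]
  have hne : (∏ i : Fin n, ((κ i).factorial : ℝ)) ≠ 0 := by positivity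
  field_simp

/-- Closed form for the generalized Bernoulli polynomial `B_n^a(-x)` in terms of
partial Bell polynomials and Stirling numbers of the second kind. -/
theorem genBernoulli_closed_form (n a : ℕ) (ha : 0 < a) (x : ℝ) :
    genBernoulliNeg a x n =
      ∑ k ∈ Finset.range (n + 1),
        (-1 : ℝ) ^ k * (k.factorial : ℝ) *
          bellPoly n k (fun m => ∑ l ∈ Finset.range (m + 1),
            (stirling2 (l + a) a : ℝ) * x ^ (m - l) * (m.choose l : ℝ) *
              ((l + a).choose a : ℝ)⁻¹) := by
  classical
  set lam : ℕ → ℝ := fun m => ∑ l ∈ Finset.range (m + 1),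
      (stirling2 (l + a) a : ℝ) * x ^ (m - l) * (m.choose l : ℝ) *
        ((l + a).choose a : ℝ)⁻¹ with hlam
  set h : PowerSeries ℝ := expm1DivT ^ a * expSeries x with hh
  have hch : ∀ m, PowerSeries.coeff m h = lam m / (m.factorial : ℝ) :=
    fun m => coeff_h a x m
  have hc0 : constantCoeff h = 1 := by
    rw [← PowerSeries.coeff_zero_eq_constantCoeff_apply, hch 0, hlam]
    simp [Finset.sum_range_one, stirling2_self]
  unfold genBernoulliNeg
  rw [inv_eq_inv_h, ← hh, coeff_inv_geom h hc0, Finset.mul_sum]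
  refine Finset.sum_congr rfl fun k _ => ?_
  have hgneg : (1 - h) = -(h - 1) := by ring
  have hck : PowerSeries.coeff n ((1 - h) ^ k)
      = (-1 : ℝ) ^ k * PowerSeries.coeff n ((h - 1) ^ k) := by
    rw [hgneg, neg_pow, show ((-1 : PowerSeries ℝ)) = PowerSeries.C (-1) by
      rw [map_neg, map_one], ← map_pow, PowerSeries.coeff_C_mul]
  have h0 : PowerSeries.coeff 0 (h - 1) = 0 := by
    rw [map_sub, PowerSeries.coeff_zero_eq_constantCoeff_apply, hc0, PowerSeries.coeff_one,
      if_pos rfl, sub_self]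
  have hgj : ∀ j, 1 ≤ j → j ≤ n →
      PowerSeries.coeff j (h - 1) = lam j / (j.factorial : ℝ) := by
    intro j hj1 _
    rw [map_sub, PowerSeries.coeff_one, if_neg (by omega), sub_zero, hch]
  have hbell := bell_coeff n k lam (h - 1) h0 hgj
  rw [hck]
  linear_combination ((-1 : ℝ) ^ k) * hbell
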